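/- For every real number b and every complex number s with Re(s) > 0, one has ∫₀^∞ cos(b·u) · (1 + cosh(u))^{−s/2} du = 2^{s/2 − 1} · Γ(s/2 + i b) · Γ(s/2 − i b) / Γ(s). -/

import Mathlib

open MeasureTheory Complex Set

private lemma cpow_eq_exp' {x : ℝ} (hx : 0 < x) (w : ℂ) :
    (x:ℂ) ^ w = Complex.exp ((Real.log x : ℂ) * w) := by
  rw [Complex.cpow_def_of_ne_zero (by exact_mod_cast hx.ne'), Complex.ofReal_log hx.le]

private noncomputable def Gaux (p s : ℂ) (u : ℝ) : ℂ :=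
  Complex.exp (p * u) * ((1 + Real.exp u : ℝ) : ℂ) ^ (-s)

private lemma beta_real_line (p q : ℂ) :
    (∫ u : ℝ, Gaux p (p+q) u) = Complex.betaIntegral p q := by
  simp only [Gaux]
  set f : ℝ → ℝ := fun u => (1 + Real.exp (-u))⁻¹ with hf
  set f' : ℝ → ℝ := fun u => Real.exp (-u) / (1 + Real.exp (-u))^2 with hf'
  have hpos : ∀ u : ℝ, 0 < 1 + Real.exp (-u) := fun u => by positivity
  have hderiv : ∀ u ∈ (univ : Set ℝ), HasDerivWithinAt f (f' u) univ u := by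
    intro u _
    have h1 : HasDerivAt (fun u : ℝ => 1 + Real.exp (-u)) (-Real.exp (-u)) u := by
      simpa using ((Real.hasDerivAt_exp (-u)).comp u (hasDerivAt_neg u)).const_add 1
    have h2 := h1.inv (hpos u).ne'
    have h3 : HasDerivAt f (f' u) u := by
      have h2' : HasDerivAt f (- -Real.exp (-u) / (1 + Real.exp (-u)) ^ 2) u := h2
      simpa [f'] using h2'
    exact h3.hasDerivWithinAt
  have hinj : InjOn f univ := by
    intro u _ v _ h
    have := inv_injective h
    have h2 : Real.exp (-u) = Real.exp (-v) := by linarith [add_left_cancel this]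
    simpa using Real.exp_injective h2
  have himg : f '' univ = Ioo (0:ℝ) 1 := by
    ext y
    simp only [image_univ, mem_range, mem_Ioo]
    constructor
    · rintro ⟨u, rfl⟩
      constructor
      · exact inv_pos.mpr (hpos u)
      · rw [inv_lt_one_iff₀]
        right
        simpa using Real.exp_pos (-u)
    · rintro ⟨h0, h1⟩
      refine ⟨-Real.log ((1-y)/y), ?_⟩
      simp only [f, neg_neg]
      rw [Real.exp_log (div_pos (by linarith) h0)]
      field_simp
      ring
  have hpt : ∀ u : ℝ, |f' u| • ((((f u : ℝ) : ℂ))^(p-1) * ((1:ℂ) - ((f u : ℝ) : ℂ))^(q-1))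
      = Complex.exp (p * u) * ((1 + Real.exp u : ℝ) : ℂ) ^ (-(p+q)) := by
    intro u
    have hE : (0:ℝ) < Real.exp u := Real.exp_pos u
    set E := Real.exp u with hEdef
    have h1E : (0:ℝ) < 1 + E := by positivity
    have hfu : f u = E / (1+E) := by
      simp only [f, Real.exp_neg, ← hEdef]
      rw [eq_div_iff h1E.ne']
      field_simp
      ring
    have hf'u : f' u = E / (1+E)^2 := by
      simp only [f', Real.exp_neg, ← hEdef]
      rw [div_eq_div_iff (by positivity) (by positivity)]
      field_simp
      ring
    have h1f : (1:ℂ) - ((f u : ℝ) : ℂ) = (((1+E)⁻¹ : ℝ) : ℂ) := by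
      have h1E' : (1:ℂ) + (E:ℂ) ≠ 0 := by
        exact_mod_cast h1E.ne'
      rw [hfu]
      push_cast
      field_simp
      ring
    have hL : Real.exp (2 * Real.log (1+E)) = (1+E)^2 := by
      rw [two_mul, Real.exp_add, Real.exp_log h1E]
      ring
    have hsc : ((E/(1+E)^2 : ℝ) : ℂ) = Complex.exp ((u - 2*Real.log (1+E) : ℝ) : ℂ) := by
      rw [← Complex.ofReal_exp]
      norm_cast
      rw [Real.exp_sub, hL, hEdef]
    have hlog1 : Real.log (E/(1+E)) = u - Real.log (1+E) := by
      rw [Real.log_div hE.ne' h1E.ne', hEdef, Real.log_exp]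
    have hlog2 : Real.log ((1+E)⁻¹) = -Real.log (1+E) := Real.log_inv _
    rw [h1f, hfu, hf'u, abs_of_pos (by positivity)]
    rw [cpow_eq_exp' (by positivity), cpow_eq_exp' (by positivity), cpow_eq_exp' h1E]
    rw [Complex.real_smul, hsc, hlog1, hlog2]
    rw [← Complex.exp_add, ← Complex.exp_add, ← Complex.exp_add]
    congr 1
    push_cast
    ring
  have key := integral_image_eq_integral_abs_deriv_smul MeasurableSet.univ hderiv hinj
      (fun x : ℝ => ((x:ℝ):ℂ)^(p-1) * ((1:ℂ) - ((x:ℝ):ℂ))^(q-1))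
  rw [himg, Measure.restrict_univ] at key
  rw [Complex.betaIntegral, intervalIntegral.integral_of_le zero_le_one,
    integral_Ioc_eq_integral_Ioo, key]
  exact (integral_congr_ae (Filter.Eventually.of_forall fun u => (hpt u))).symm

private lemma cosh_pointwise (b u : ℝ) (s : ℂ) :
    (Real.cos (b * u) : ℂ) * ((1 + Real.cosh u : ℝ) : ℂ) ^ (-(s / 2)) =
      (2:ℂ)^(s/2-1) * (Gaux (s/2 + I*b) s u + Gaux (s/2 + I*b) s (-u)) := by
  simp only [Gaux]
  have hE : (0:ℝ) < Real.exp u := Real.exp_pos u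
  set E := Real.exp u with hEdef
  have h1E : (0:ℝ) < 1 + E := by positivity
  set A := Real.log (1 + E) with hA
  have hcosh : 1 + Real.cosh u = (1+E)^2 / (2*E) := by
    rw [Real.cosh_eq, Real.exp_neg, ← hEdef]
    field_simp
    ring
  have hlogc : Real.log ((1+E)^2 / (2*E)) = 2*A - (Real.log 2 + u) := by
    rw [Real.log_div (by positivity) (by positivity), Real.log_pow,
      Real.log_mul (by norm_num) hE.ne', hEdef, Real.log_exp, ← hEdef, ← hA]
    push_cast
    ring
  have hexpneg : 1 + Real.exp (-u) = (1+E)/E := by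
    rw [Real.exp_neg, ← hEdef]
    field_simp
    ring
  have hlogn : Real.log ((1+E)/E) = A - u := by
    rw [Real.log_div h1E.ne' hE.ne', hEdef, Real.log_exp, ← hEdef, ← hA]
  have h2 : Complex.exp ((Real.log 2 : ℝ) : ℂ) = 2 := by
    rw [← Complex.ofReal_exp, Real.exp_log (by norm_num : (0:ℝ) < 2)]
    norm_num
  have hcos : (Real.cos (b*u) : ℂ)
      = (Complex.exp ((b*u : ℝ) * I) + Complex.exp (-(b*u : ℝ) * I)) / 2 := by
    rw [Complex.ofReal_cos, Complex.cos]
  have h2pow := cpow_eq_exp' (by norm_num : (0:ℝ) < 2) (s/2-1)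
  rw [show ((2:ℝ):ℂ) = (2:ℂ) from by norm_num] at h2pow
  rw [hcos, hcosh, hexpneg,
    cpow_eq_exp' (by positivity) (-(s/2)), hlogc,
    cpow_eq_exp' h1E (-s),
    cpow_eq_exp' (by positivity) (-s), hlogn, h2pow]
  have hdiv : ∀ X : ℂ, Complex.exp X / 2 = Complex.exp (X - ((Real.log 2 : ℝ) : ℂ)) :=
    fun X => by rw [Complex.exp_sub, h2]
  rw [div_mul_eq_mul_div, add_mul, ← Complex.exp_add, ← Complex.exp_add, add_div,
    hdiv, hdiv, mul_add]
  simp only [← Complex.exp_add]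
  congr 1
  · congr 1
    push_cast
    ring
  · congr 1
    push_cast
    ring

/-- Closed-form evaluation of `∫₀^∞ cos(bu)(1+cosh u)^{-s/2} du` for `Re s > 0`. -/
theorem cosh_integral_eval (b : ℝ) (s : ℂ) (hs : 0 < s.re) :
    ∫ u in Set.Ioi (0:ℝ),
      (Real.cos (b * u) : ℂ) * ((1 + Real.cosh u : ℝ) : ℂ) ^ (-(s / 2)) =
      (2 : ℂ) ^ (s / 2 - 1) * Complex.Gamma (s / 2 + I * b) *
        Complex.Gamma (s / 2 - I * b) / Complex.Gamma s := by
  set p := s/2 + I*(b:ℂ) with hp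
  set q := s/2 - I*(b:ℂ) with hq
  have hpq : p + q = s := by rw [hp, hq]; ring
  have hppre : p.re = s.re / 2 := by
    simp [hp, Complex.add_re, Complex.div_re, Complex.mul_re, Complex.normSq]
  have hqre : q.re = s.re / 2 := by
    simp [hq, Complex.sub_re, Complex.div_re, Complex.mul_re, Complex.normSq]
  set G : ℝ → ℂ := Gaux p s with hG
  have hGcont : Continuous G := by
    apply Continuous.mul
    · exact Complex.continuous_exp.comp (continuous_const.mul Complex.continuous_ofReal)
    · apply Continuous.cpow
      · exact Complex.continuous_ofReal.comp (continuous_const.add Real.continuous_exp)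
      · exact continuous_const
      · intro u
        left
        simp only [Complex.ofReal_re]
        positivity
  have hGnorm : ∀ u : ℝ, ‖G u‖ = Real.exp (s.re/2 * u) * (1 + Real.exp u) ^ (-s.re) := by
    intro u
    rw [hG]
    simp only [Gaux, norm_mul, Complex.norm_exp,
      Complex.norm_cpow_eq_rpow_re_of_pos (by positivity : (0:ℝ) < 1 + Real.exp u)]
    rw [Complex.neg_re]
    congr 2
    simp [Complex.mul_re, hppre]
  have hInt1 : IntegrableOn G (Ioi (0:ℝ)) := by
    apply Integrable.mono' (exp_neg_integrableOn_Ioi 0 (by positivity : (0:ℝ) < s.re/2))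
      hGcont.aestronglyMeasurable.restrict
    rw [ae_restrict_iff' measurableSet_Ioi]
    filter_upwards with u hu
    rw [hGnorm u]
    have h1 : (1 + Real.exp u) ^ (-s.re) ≤ (Real.exp u) ^ (-s.re) :=
      Real.rpow_le_rpow_of_nonpos (Real.exp_pos u) (by linarith [Real.exp_pos u])
        (by linarith : -s.re ≤ 0)
    have h2 : (Real.exp u) ^ (-s.re) = Real.exp (-s.re * u) := by
      rw [Real.rpow_def_of_pos (Real.exp_pos u), Real.log_exp]
      ring_nf
    calc Real.exp (s.re/2 * u) * (1 + Real.exp u) ^ (-s.re)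
        ≤ Real.exp (s.re/2 * u) * Real.exp (-s.re * u) := by
          exact mul_le_mul_of_nonneg_left (h2 ▸ h1) (Real.exp_pos _).le
      _ = Real.exp (-(s.re/2) * u) := by rw [← Real.exp_add]; ring_nf
  have hInt2 : IntegrableOn (fun u => G (-u)) (Ioi (0:ℝ)) := by
    apply Integrable.mono' (exp_neg_integrableOn_Ioi 0 (by positivity : (0:ℝ) < s.re/2))
      (hGcont.comp continuous_neg).aestronglyMeasurable.restrict
    rw [ae_restrict_iff' measurableSet_Ioi]
    filter_upwards with u hu
    simp only [Function.comp_apply]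
    rw [hGnorm (-u)]
    have h1 : (1 + Real.exp (-u)) ^ (-s.re) ≤ 1 :=
      Real.rpow_le_one_of_one_le_of_nonpos (by linarith [Real.exp_pos (-u)]) (by linarith)
    calc Real.exp (s.re/2 * (-u)) * (1 + Real.exp (-u)) ^ (-s.re)
        ≤ Real.exp (s.re/2 * (-u)) * 1 := by
          exact mul_le_mul_of_nonneg_left h1 (Real.exp_pos _).le
      _ = Real.exp (-(s.re/2) * u) := by rw [mul_one]; ring_nf
  have hInt3 : IntegrableOn G (Iic (0:ℝ)) := by
    rw [← (Measure.measurePreserving_neg (volume : Measure ℝ)).integrableOn_comp_preimage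
      (Homeomorph.neg ℝ).measurableEmbedding]
    simp only [Function.comp_def, neg_preimage, neg_Iic, neg_zero]
    rw [integrableOn_Ici_iff_integrableOn_Ioi]
    exact hInt2
  have hbeta := beta_real_line p q
  rw [hpq] at hbeta
  have hΓ := Complex.Gamma_mul_Gamma_eq_betaIntegral
    (by rw [hppre]; linarith : 0 < p.re) (by rw [hqre]; linarith : 0 < q.re)
  rw [hpq] at hΓ
  have hbe : Complex.betaIntegral p q
      = Complex.Gamma p * Complex.Gamma q / Complex.Gamma s := by
    rw [eq_div_iff (Complex.Gamma_ne_zero_of_re_pos hs), hΓ]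
    ring
  calc ∫ u in Set.Ioi (0:ℝ),
        (Real.cos (b * u) : ℂ) * ((1 + Real.cosh u : ℝ) : ℂ) ^ (-(s / 2))
      = ∫ u in Set.Ioi (0:ℝ), (2:ℂ)^(s/2-1) * (G u + G (-u)) :=
        setIntegral_congr_fun measurableSet_Ioi (fun u _ => cosh_pointwise b u s)
    _ = (2:ℂ)^(s/2-1) * ((∫ u in Set.Ioi (0:ℝ), G u) + ∫ u in Set.Ioi (0:ℝ), G (-u)) := by
        rw [integral_const_mul, integral_add hInt1 hInt2]
    _ = (2:ℂ)^(s/2-1) * ((∫ u in Set.Iic (0:ℝ), G u) + ∫ u in Set.Ioi (0:ℝ), G u) := by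
        rw [integral_comp_neg_Ioi, neg_zero]
        ring
    _ = (2:ℂ)^(s/2-1) * ∫ u : ℝ, G u := by
        rw [intervalIntegral.integral_Iic_add_Ioi hInt3 hInt1]
    _ = (2:ℂ)^(s/2-1) * (Complex.Gamma p * Complex.Gamma q / Complex.Gamma s) := by
        rw [hG, hbeta, hbe]
    _ = (2 : ℂ) ^ (s / 2 - 1) * Complex.Gamma (s / 2 + I * b) *
        Complex.Gamma (s / 2 - I * b) / Complex.Gamma s := by
        rw [hp, hq]
        ring
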